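/- Let ν ≥ 0 and λ > 0 be real numbers and define u(r,θ) = J_ν(√λ·r)·sin(ν·θ) for r > 0 and θ ∈ ℝ. Then u satisfies the polar-coordinate Helmholtz equation: for all r > 0 and all θ ∈ ℝ, ∂²u/∂r²(r,θ) + (1/r)·∂u/∂r(r,θ) + (1/r²)·∂²u/∂θ²(r,θ) + λ·u(r,θ) = 0, where ∂/∂r and ∂/∂θ denote derivatives of the one-variable functions r ↦ u(r,θ) and θ ↦ u(r,θ) respectively (and these functions are twice differentiable). -/

import Mathlib

open Real

set_option maxHeartbeats 1000000

noncomputable def psum (a : ℕ → ℝ) (t : ℝ) : ℝ := ∑' s : ℕ, a s * t ^ s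

noncomputable def dcoef (a : ℕ → ℝ) (s : ℕ) : ℝ := ((s : ℝ) + 1) * a (s + 1)

lemma dcoef_bound {a : ℕ → ℝ} {C : ℝ} (hC : ∀ s, |a s| ≤ C / s.factorial) :
    ∀ s, |dcoef a s| ≤ C / s.factorial := by
  intro s
  have h := hC (s + 1)
  have hfac : ((s + 1).factorial : ℝ) = ((s : ℝ) + 1) * s.factorial := by
    rw [Nat.factorial_succ]; push_cast; ring
  rw [dcoef, abs_mul, abs_of_nonneg (by positivity : (0:ℝ) ≤ (s:ℝ) + 1)]
  rw [hfac] at h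
  have hs1 : (0:ℝ) < (s:ℝ) + 1 := by positivity
  have hf : (0:ℝ) < (s.factorial : ℝ) := by positivity
  calc ((s:ℝ) + 1) * |a (s + 1)| ≤ ((s:ℝ) + 1) * (C / (((s:ℝ) + 1) * s.factorial)) := by
        gcongr
    _ = C / s.factorial := by field_simp
lemma psum_summable {a : ℕ → ℝ} {C : ℝ} (hC : ∀ s, |a s| ≤ C / s.factorial) (t : ℝ) :
    Summable (fun s : ℕ => a s * t ^ s) := by
  apply Summable.of_norm
  have hsum : Summable (fun s : ℕ => C * (|t| ^ s / s.factorial)) :=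
    (Real.summable_pow_div_factorial |t|).mul_left C
  refine Summable.of_nonneg_of_le (fun s => norm_nonneg _) (fun s => ?_) hsum
  rw [norm_mul, norm_pow, Real.norm_eq_abs, Real.norm_eq_abs]
  calc |a s| * |t| ^ s ≤ (C / s.factorial) * |t| ^ s := by
        exact mul_le_mul_of_nonneg_right (hC s) (by positivity)
    _ = C * (|t| ^ s / s.factorial) := by ring

lemma psum_hasDerivAt {a : ℕ → ℝ} {C : ℝ} (hC : ∀ s, |a s| ≤ C / s.factorial) (t : ℝ) :
    HasDerivAt (psum a) (psum (dcoef a) t) t := by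
  have hC0 : 0 ≤ C := le_trans (abs_nonneg (a 0)) (by simpa using hC 0)
  set R : ℝ := |t| + 1 with hR
  have hR1 : 1 ≤ R := le_add_of_nonneg_left (abs_nonneg t)
  have hR0 : 0 ≤ R := by linarith
  have hbound : ∀ (s : ℕ) (y : ℝ), y ∈ Metric.ball (0:ℝ) R →
      ‖a s * ((s:ℝ) * y ^ (s - 1))‖ ≤ C * (2 * R) ^ s / s.factorial := by
    intro s y hy
    have hyR : |y| ≤ R := le_of_lt (by simpa using hy)
    have h1 : |a s * ((s:ℝ) * y ^ (s - 1))| = |a s| * ((s:ℝ) * |y| ^ (s - 1)) := by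
      rw [abs_mul, abs_mul, abs_pow, Nat.abs_cast]
    rw [Real.norm_eq_abs, h1]
    have h2 : (s:ℝ) * |y| ^ (s - 1) ≤ 2 ^ s * R ^ s := by
      have hs2 : (s:ℝ) ≤ 2 ^ s := by
        exact_mod_cast (Nat.lt_two_pow_self (n := s)).le
      have hyp : |y| ^ (s - 1) ≤ R ^ (s - 1) := by
        exact pow_le_pow_left₀ (abs_nonneg y) hyR _
      have hRp : R ^ (s - 1) ≤ R ^ s := pow_le_pow_right₀ hR1 (Nat.sub_le s 1)
      calc (s:ℝ) * |y| ^ (s - 1) ≤ 2 ^ s * R ^ (s-1) := by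
            exact mul_le_mul hs2 hyp (by positivity) (by positivity)
        _ ≤ 2 ^ s * R ^ s := by gcongr
    calc |a s| * ((s:ℝ) * |y| ^ (s - 1)) ≤ (C / s.factorial) * (2 ^ s * R ^ s) := by
          exact mul_le_mul (hC s) h2 (by positivity) (by positivity)
      _ = C * (2 * R) ^ s / s.factorial := by rw [mul_pow]; ring
  have hsumu : Summable (fun s : ℕ => C * (2 * R) ^ s / s.factorial) := by
    simpa [mul_div_assoc] using (Real.summable_pow_div_factorial (2 * R)).mul_left C
  have htball : t ∈ Metric.ball (0:ℝ) R := by simp [hR]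
  have key : HasDerivAt (fun z => ∑' s : ℕ, a s * z ^ s)
      (∑' s : ℕ, a s * ((s:ℝ) * t ^ (s - 1))) t := by
    refine hasDerivAt_tsum_of_isPreconnected hsumu Metric.isOpen_ball
      ?_ (fun s y _ => ((hasDerivAt_pow s y).const_mul (a s))) hbound htball
      (psum_summable hC t) htball
    exact (convex_ball (0:ℝ) R).isPreconnected
  have hsum' : Summable (fun s : ℕ => a s * ((s:ℝ) * t ^ (s - 1))) := by
    apply Summable.of_norm
    exact Summable.of_nonneg_of_le (fun s => norm_nonneg _)
      (fun s => hbound s t htball) hsumu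
  have heq : (∑' s : ℕ, a s * ((s:ℝ) * t ^ (s - 1))) = psum (dcoef a) t := by
    rw [Summable.tsum_eq_zero_add hsum']
    simp only [Nat.cast_zero, zero_mul, mul_zero, zero_add]
    unfold psum dcoef
    apply tsum_congr
    intro s
    push_cast
    ring
  rw [heq] at key
  exact key

lemma psum_ode {a : ℕ → ℝ} {C ν : ℝ}
    (hrec : ∀ s : ℕ, ((s : ℝ) + 1) * (ν + s + 1) * a (s + 1) = - a s)
    (hC : ∀ s, |a s| ≤ C / s.factorial) (t : ℝ) :
    t * psum (dcoef (dcoef a)) t + (ν + 1) * psum (dcoef a) t + psum a t = 0 := by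
  have hCb := dcoef_bound hC
  have hCc := dcoef_bound hCb
  have hsa := psum_summable hC t
  have hsb := psum_summable hCb t
  have hsc := psum_summable hCc t
  -- rewrite t * psum c t
  have h1 : t * psum (dcoef (dcoef a)) t = ∑' s : ℕ, dcoef (dcoef a) s * t ^ (s + 1) := by
    rw [psum, ← tsum_mul_left]
    apply tsum_congr; intro s; ring
  have h2 : psum (dcoef a) t = dcoef a 0 + ∑' s : ℕ, dcoef a (s + 1) * t ^ (s + 1) := by
    rw [psum, Summable.tsum_eq_zero_add hsb]; simp
  have h3 : psum a t = a 0 + ∑' s : ℕ, a (s + 1) * t ^ (s + 1) := by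
    rw [psum, Summable.tsum_eq_zero_add hsa]; simp
  have hsc' : Summable (fun s : ℕ => dcoef (dcoef a) s * t ^ (s + 1)) := by
    refine (hsc.mul_right t).congr (fun s => ?_); ring
  have hsb' : Summable (fun s : ℕ => dcoef a (s + 1) * t ^ (s + 1)) :=
    (summable_nat_add_iff 1).2 hsb
  have hsa' : Summable (fun s : ℕ => a (s + 1) * t ^ (s + 1)) :=
    (summable_nat_add_iff 1).2 hsa
  rw [h1, h2, h3]
  have hkey : ∑' s : ℕ, (dcoef (dcoef a) s * t ^ (s + 1)
      + ((ν + 1) * (dcoef a (s + 1) * t ^ (s + 1)) + a (s + 1) * t ^ (s + 1))) = 0 := by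
    have : ∀ s : ℕ, dcoef (dcoef a) s * t ^ (s + 1)
        + ((ν + 1) * (dcoef a (s + 1) * t ^ (s + 1)) + a (s + 1) * t ^ (s + 1)) = 0 := by
      intro s
      have h := hrec (s + 1)
      unfold dcoef
      push_cast at h ⊢
      linear_combination t ^ (s + 1) * h
    rw [tsum_congr this, tsum_zero]
  rw [Summable.tsum_add hsc' (hsb'.mul_left (ν+1) |>.add hsa'),
      Summable.tsum_add (hsb'.mul_left (ν+1)) hsa', tsum_mul_left] at hkey
  have h00 : (ν + 1) * dcoef a 0 + a 0 = 0 := by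
    have h0 := hrec 0
    unfold dcoef
    push_cast at h0 ⊢
    linear_combination h0
  linear_combination hkey + h00
noncomputable def bcoef (ν : ℝ) (s : ℕ) : ℝ :=
  ((-1 : ℝ) ^ s) / ((s.factorial : ℝ) * Real.Gamma (ν + (s : ℝ) + 1))

lemma bcoef_rec {ν : ℝ} (hν : 0 ≤ ν) :
    ∀ s : ℕ, ((s : ℝ) + 1) * (ν + s + 1) * bcoef ν (s + 1) = - bcoef ν s := by
  intro s
  have hpos : (0:ℝ) < ν + s + 1 := by positivity
  have hG : Real.Gamma (ν + (s+1:ℕ) + 1) = (ν + s + 1) * Real.Gamma (ν + s + 1) := by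
    have : ν + ((s:ℝ)+1) + 1 = (ν + s + 1) + 1 := by push_cast; ring
    push_cast
    rw [this, Real.Gamma_add_one (ne_of_gt hpos)]
  have hGpos : (0:ℝ) < Real.Gamma (ν + s + 1) := Real.Gamma_pos_of_pos (by positivity)
  have hfac : ((s + 1).factorial : ℝ) = ((s : ℝ) + 1) * s.factorial := by
    rw [Nat.factorial_succ]; push_cast; ring
  have hf : (0:ℝ) < (s.factorial : ℝ) := by positivity
  unfold bcoef
  rw [hG, hfac]
  push_cast
  field_simp
  ring
lemma bcoef_bound {ν : ℝ} (hν : 0 ≤ ν) :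
    ∀ s : ℕ, |bcoef ν s| ≤ (1 / Real.Gamma (ν + 1)) / s.factorial := by
  have hG1 : (0:ℝ) < Real.Gamma (ν + 1) := Real.Gamma_pos_of_pos (by positivity)
  have hlow : ∀ s : ℕ, (s.factorial : ℝ) * Real.Gamma (ν + 1) ≤ Real.Gamma (ν + s + 1) := by
    intro s
    induction s with
    | zero => simp
    | succ n ih =>
      have hpos : (0:ℝ) < ν + n + 1 := by positivity
      have hG : Real.Gamma (ν + (n+1:ℕ) + 1) = (ν + n + 1) * Real.Gamma (ν + n + 1) := by
        have h : ν + ((n:ℝ)+1) + 1 = (ν + n + 1) + 1 := by push_cast; ring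
        push_cast
        rw [h, Real.Gamma_add_one (ne_of_gt hpos)]
      rw [hG, Nat.factorial_succ]
      push_cast
      calc ((n:ℝ) + 1) * n.factorial * Real.Gamma (ν + 1)
          = ((n:ℝ)+1) * ((n.factorial : ℝ) * Real.Gamma (ν + 1)) := by ring
        _ ≤ (ν + n + 1) * Real.Gamma (ν + n + 1) := by
            apply mul_le_mul (by linarith) ih (by positivity) (by linarith)
  intro s
  have hGpos : (0:ℝ) < Real.Gamma (ν + s + 1) := Real.Gamma_pos_of_pos (by positivity)
  have hf : (0:ℝ) < (s.factorial : ℝ) := by positivity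
  have habs : |bcoef ν s| = 1 / ((s.factorial : ℝ) * Real.Gamma (ν + s + 1)) := by
    unfold bcoef
    rw [abs_div, abs_pow, abs_neg, abs_one, one_pow,
      abs_of_pos (by positivity)]
  rw [habs]
  rw [div_div, div_le_div_iff₀ (by positivity) (by positivity)]
  calc (1:ℝ) * (Real.Gamma (ν+1) * s.factorial)
      = (s.factorial : ℝ) * Real.Gamma (ν + 1) := by ring
    _ ≤ Real.Gamma (ν + s + 1) := hlow s
    _ ≤ (s.factorial : ℝ) * Real.Gamma (ν + s + 1) := by
        nlinarith [(Nat.one_le_cast (α := ℝ)).2 s.factorial_pos]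
    _ = 1 * ((s.factorial : ℝ) * Real.Gamma (ν + s + 1)) := by ring

/-- Bessel function of the first kind of real order `ν`, defined by its series. -/
noncomputable def besselJ (ν : ℝ) (x : ℝ) : ℝ :=
  ∑' s : ℕ, ((-1 : ℝ) ^ s) * (x / 2) ^ (ν + 2 * (s : ℝ)) /
    ((s.factorial : ℝ) * Real.Gamma (ν + (s : ℝ) + 1))

lemma besselJ_eq (ν : ℝ) {x : ℝ} (hx : 0 < x) :
    besselJ ν x = (x / 2) ^ ν * psum (bcoef ν) (x ^ 2 / 4) := by
  have hx2 : (0:ℝ) < x / 2 := by linarith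
  rw [besselJ, psum, ← tsum_mul_left]
  apply tsum_congr
  intro s
  have h1 : (x / 2 : ℝ) ^ (ν + 2 * (s:ℝ)) = (x/2) ^ ν * ((x/2) ^ (2*s : ℕ)) := by
    rw [Real.rpow_add hx2, ← Real.rpow_natCast (x/2) (2*s)]
    push_cast
    ring_nf
  have h2 : ((x/2 : ℝ)) ^ (2*s : ℕ) = (x^2/4) ^ s := by
    rw [pow_mul]
    norm_num
    rw [div_pow]
    norm_num
  rw [h1, h2, bcoef]
  ring

noncomputable def bG (ν t : ℝ) : ℝ := psum (bcoef ν) t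
noncomputable def bG1 (ν t : ℝ) : ℝ := psum (dcoef (bcoef ν)) t
noncomputable def bG2 (ν t : ℝ) : ℝ := psum (dcoef (dcoef (bcoef ν))) t

noncomputable def bH (ν x : ℝ) : ℝ := (x / 2) ^ ν * bG ν (x ^ 2 / 4)
noncomputable def bH1 (ν x : ℝ) : ℝ :=
  ν * (x / 2) ^ (ν - 1) * (1 / 2) * bG ν (x ^ 2 / 4)
    + (x / 2) ^ ν * (bG1 ν (x ^ 2 / 4) * (x / 2))

lemma hasDerivAt_half_rpow (p : ℝ) {x : ℝ} (hx : 0 < x) :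
    HasDerivAt (fun y : ℝ => (y / 2) ^ p) (p * (x / 2) ^ (p - 1) * (1 / 2)) x := by
  have h1 : HasDerivAt (fun y : ℝ => y / 2) (1 / 2) x := (hasDerivAt_id x).div_const 2
  have h2 := Real.hasDerivAt_rpow_const (x := x / 2) (p := p) (Or.inl (by positivity))
  exact h2.comp x h1
lemma hasDerivAt_sq4 (x : ℝ) : HasDerivAt (fun y : ℝ => y ^ 2 / 4) (x / 2) x := by
  have := (hasDerivAt_pow 2 x).div_const 4
  exact this.congr_deriv (by push_cast; ring)
lemma bG_comp_hasDerivAt {ν : ℝ} (hν : 0 ≤ ν) (x : ℝ) :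
    HasDerivAt (fun y => bG ν (y ^ 2 / 4)) (bG1 ν (x ^ 2 / 4) * (x / 2)) x :=
  (psum_hasDerivAt (bcoef_bound hν) (x ^ 2 / 4)).comp x (hasDerivAt_sq4 x)
lemma bG1_comp_hasDerivAt {ν : ℝ} (hν : 0 ≤ ν) (x : ℝ) :
    HasDerivAt (fun y => bG1 ν (y ^ 2 / 4)) (bG2 ν (x ^ 2 / 4) * (x / 2)) x :=
  (psum_hasDerivAt (dcoef_bound (bcoef_bound hν)) (x ^ 2 / 4)).comp x (hasDerivAt_sq4 x)

lemma bH_hasDerivAt {ν : ℝ} (hν : 0 ≤ ν) {x : ℝ} (hx : 0 < x) :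
    HasDerivAt (bH ν) (bH1 ν x) x := by
  have h := ((hasDerivAt_half_rpow ν hx).mul (bG_comp_hasDerivAt hν x))
  exact h
lemma bH1_hasDerivAt_ode {ν : ℝ} (hν : 0 ≤ ν) {x : ℝ} (hx : 0 < x) :
    ∃ d, HasDerivAt (bH1 ν) d x ∧
      x ^ 2 * d + x * bH1 ν x + (x ^ 2 - ν ^ 2) * bH ν x = 0 := by
  have hx2 : (0:ℝ) < x / 2 := by linarith
  have hA : HasDerivAt (fun y => ν * (y / 2) ^ (ν - 1) * (1 / 2) * bG ν (y ^ 2 / 4))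
      (((ν - 1) * (x/2) ^ (ν - 1 - 1) * (1/2) * ν * (1/2)) * bG ν (x^2/4)
        + (ν * (x / 2) ^ (ν - 1) * (1 / 2)) * (bG1 ν (x ^ 2 / 4) * (x / 2))) x := by
    have h1 := (((hasDerivAt_half_rpow (ν - 1) hx).const_mul ν).mul_const (1/2)).mul
      (bG_comp_hasDerivAt hν x)
    exact h1.congr_deriv (by ring)
  have hB : HasDerivAt (fun y => (y / 2) ^ ν * (bG1 ν (y ^ 2 / 4) * (y / 2)))
      ((ν * (x/2) ^ (ν - 1) * (1/2)) * (bG1 ν (x ^ 2 / 4) * (x / 2))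
        + (x/2) ^ ν * ((bG2 ν (x^2/4) * (x/2)) * (x/2) + bG1 ν (x^2/4) * (1/2))) x := by
    have hin : HasDerivAt (fun y : ℝ => bG1 ν (y ^ 2 / 4) * (y / 2))
        ((bG2 ν (x^2/4) * (x/2)) * (x/2) + bG1 ν (x^2/4) * (1/2)) x :=
      (bG1_comp_hasDerivAt hν x).mul ((hasDerivAt_id x).div_const 2)
    exact (hasDerivAt_half_rpow ν hx).mul hin
  refine ⟨_, hA.add hB, ?_⟩
  have hode := psum_ode (bcoef_rec hν) (bcoef_bound hν) (x ^ 2 / 4)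
  have e1 : (x/2 : ℝ) ^ (ν - 1) = (x/2) ^ ν / (x/2) := by
    rw [Real.rpow_sub hx2, Real.rpow_one]
  have e2 : (x/2 : ℝ) ^ (ν - 1 - 1) = (x/2) ^ ν / (x/2) / (x/2) := by
    rw [Real.rpow_sub hx2, Real.rpow_sub hx2, Real.rpow_one]
  rw [bH, bH1, e1, e2]
  have hode' : (x^2/4) * bG2 ν (x^2/4) + (ν+1) * bG1 ν (x^2/4) + bG ν (x^2/4) = 0 := hode
  have hxne : x ≠ 0 := ne_of_gt hx
  field_simp
  linear_combination ((x/2)^ν * 4 * x^2) * hode'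

/-- `u(r,θ) = J_ν(√λ r) sin(νθ)` satisfies the polar-coordinate Helmholtz equation
`u_rr + (1/r) u_r + (1/r²) u_θθ + λ u = 0` for all `r > 0`, `θ ∈ ℝ`. -/
theorem besselJ_eigenfunction_polar (ν lam : ℝ) (hν : 0 ≤ ν) (hlam : 0 < lam)
    (u : ℝ → ℝ → ℝ)
    (hu : ∀ r θ : ℝ, u r θ = besselJ ν (Real.sqrt lam * r) * Real.sin (ν * θ)) :
    ∀ r : ℝ, 0 < r → ∀ θ : ℝ,
      DifferentiableAt ℝ (fun s => u s θ) r ∧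
      DifferentiableAt ℝ (deriv (fun s => u s θ)) r ∧
      DifferentiableAt ℝ (fun t => u r t) θ ∧
      DifferentiableAt ℝ (deriv (fun t => u r t)) θ ∧
      deriv (deriv (fun s => u s θ)) r + (1 / r) * deriv (fun s => u s θ) r
        + (1 / r ^ 2) * deriv (deriv (fun t => u r t)) θ + lam * u r θ = 0 := by
  intro r hr θ
  have hsq0 : 0 < Real.sqrt lam := Real.sqrt_pos.2 hlam
  set q := Real.sqrt lam with hq
  have hsq2 : q ^ 2 = lam := Real.sq_sqrt hlam.le
  have hE : ∀ s : ℝ, 0 < s →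
      (fun y => u y θ) =ᶠ[nhds s] (fun y => bH ν (q * y) * Real.sin (ν * θ)) := by
    intro s hs
    filter_upwards [isOpen_Ioi.mem_nhds hs] with y hy
    rw [hu, besselJ_eq ν (mul_pos hsq0 hy), bH, bG]
  have hDer1 : ∀ s : ℝ, 0 < s → HasDerivAt (fun y => bH ν (q * y) * Real.sin (ν * θ))
      (bH1 ν (q * s) * q * Real.sin (ν * θ)) s := by
    intro s hs
    have hinner : HasDerivAt (fun y : ℝ => q * y) q s := by
      simpa using (hasDerivAt_id s).const_mul q
    have h := ((bH_hasDerivAt hν (by positivity : (0:ℝ) < q * s)).comp s hinner).mul_const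
      (Real.sin (ν * θ))
    exact h
  have hU1 : ∀ s : ℝ, 0 < s → HasDerivAt (fun y => u y θ)
      (bH1 ν (q * s) * q * Real.sin (ν * θ)) s := fun s hs =>
    (hDer1 s hs).congr_of_eventuallyEq (hE s hs)
  have hderiv1 : deriv (fun y => u y θ) =ᶠ[nhds r]
      (fun s => bH1 ν (q * s) * q * Real.sin (ν * θ)) := by
    filter_upwards [isOpen_Ioi.mem_nhds hr] with s hs
    exact (hU1 s hs).deriv
  obtain ⟨d, hd, hodeq⟩ := bH1_hasDerivAt_ode hν (show (0:ℝ) < q * r by positivity)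
  have hDer2 : HasDerivAt (fun s => bH1 ν (q * s) * q * Real.sin (ν * θ))
      (d * q * q * Real.sin (ν * θ)) r := by
    have hinner : HasDerivAt (fun y : ℝ => q * y) q r := by
      simpa using (hasDerivAt_id r).const_mul q
    have h := ((hd.comp r hinner).mul_const q).mul_const (Real.sin (ν * θ))
    exact h
  have hU2 : HasDerivAt (deriv fun y => u y θ) (d * q * q * Real.sin (ν * θ)) r :=
    hDer2.congr_of_eventuallyEq hderiv1
  have hfun : (fun t => u r t) = fun t => besselJ ν (q * r) * Real.sin (ν * t) :=
    funext fun t => hu r t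
  have hθ1 : ∀ t : ℝ, HasDerivAt (fun t => u r t)
      (besselJ ν (q * r) * (Real.cos (ν * t) * ν)) t := by
    intro t
    rw [hfun]
    have hin : HasDerivAt (fun t : ℝ => ν * t) ν t := by
      simpa using (hasDerivAt_id t).const_mul ν
    have h := ((Real.hasDerivAt_sin (ν * t)).comp t hin).const_mul (besselJ ν (q * r))
    exact h
  have hθd : deriv (fun t => u r t) = fun t => besselJ ν (q * r) * (Real.cos (ν * t) * ν) :=
    funext fun t => (hθ1 t).deriv
  have hθ2 : HasDerivAt (deriv fun t => u r t)
      (besselJ ν (q * r) * (-Real.sin (ν * θ) * ν * ν)) θ := by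
    rw [hθd]
    have hin : HasDerivAt (fun t : ℝ => ν * t) ν θ := by
      simpa using (hasDerivAt_id θ).const_mul ν
    have h := (((Real.hasDerivAt_cos (ν * θ)).comp θ hin).mul_const ν).const_mul
      (besselJ ν (q * r))
    exact h
  refine ⟨(hU1 r hr).differentiableAt, hU2.differentiableAt, (hθ1 θ).differentiableAt,
    hθ2.differentiableAt, ?_⟩
  rw [hU2.deriv, (hU1 r hr).deriv, hθ2.deriv, hu]
  have hBH : besselJ ν (q * r) = bH ν (q * r) := by
    rw [besselJ_eq ν (by positivity : (0:ℝ) < q * r), bH, bG]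
  rw [hBH, ← hsq2]
  have hrne : r ≠ 0 := ne_of_gt hr
  field_simp
  linear_combination (Real.sin (ν * θ)) * hodeq
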